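/- Let S ⊆ H be nonempty and x : [0,∞) → H such that (i) for every z ∈ S, lim_{t→∞} ‖x(t) − z‖ exists, and (ii) every weak sequential limit point of x(t) as t → ∞ belongs to S. Then x(t) converges weakly as t → ∞ to a point of S. -/

import Mathlib

open MeasureTheory Filter Asymptotics Set

open Filter Topology TopologicalSpace


lemma weak_bw {H : Type*} [NormedAddCommGroup H] [InnerProductSpace ℝ H] [CompleteSpace H]
    (u : ℕ → H) (M : ℝ) (hu : ∀ n, ‖u n‖ ≤ M) :
    ∃ p : H, ∃ φ : ℕ → ℕ, StrictMono φ ∧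
      ∀ y : H, Tendsto (fun n => (inner ℝ (u (φ n)) y : ℝ)) atTop (nhds (inner ℝ p y : ℝ)) := by
  have hM0 : 0 ≤ M := le_trans (norm_nonneg _) (hu 0)
  -- the separable closed span
  set K : Submodule ℝ H := (Submodule.span ℝ (Set.range u)).topologicalClosure with hK
  have hKclosed : IsClosed (K : Set H) := Submodule.isClosed_topologicalClosure _
  haveI : CompleteSpace K := hKclosed.completeSpace_coe
  have huK : ∀ n, u n ∈ K :=
    fun n => Submodule.le_topologicalClosure _ (Submodule.subset_span ⟨n, rfl⟩)
  have hsep : IsSeparable (K : Set H) := by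
    have : IsSeparable (Set.range u) := (Set.countable_range u).isSeparable
    exact (this.span).closure
  haveI : SeparableSpace (K : Set H) := hsep.separableSpace
  haveI : Nonempty (K : Set H) := ⟨⟨0, K.zero_mem⟩⟩
  set d : ℕ → H := fun k => (denseSeq (K : Set H) k : H) with hd
  have hdK : ∀ k, d k ∈ K := fun k => (denseSeq (K : Set H) k).2
  have hdense : ∀ w ∈ K, ∀ ε > 0, ∃ k, ‖w - d k‖ < ε := by
    intro w hw ε hε
    have := denseRange_denseSeq (K : Set H)
    obtain ⟨k, hk⟩ := Metric.denseRange_iff.1 this ⟨w, hw⟩ ε hε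
    refine ⟨k, ?_⟩
    have : dist (⟨w, hw⟩ : (K : Set H)) (denseSeq (K : Set H) k) < ε := hk
    simpa [hd, Subtype.dist_eq, dist_eq_norm] using this
  -- diagonal extraction via seq compactness of a compact set in ℝ^ℕ
  set C : Set (ℕ → ℝ) := Set.univ.pi (fun k => Set.Icc (-(M * ‖d k‖)) (M * ‖d k‖)) with hC
  have hCc : IsCompact C := isCompact_univ_pi (fun k => isCompact_Icc)
  have hFmem : ∀ n, (fun k => (inner ℝ (u n) (d k) : ℝ)) ∈ C := by
    intro n
    intro k _
    have h1 : |(inner ℝ (u n) (d k) : ℝ)| ≤ ‖u n‖ * ‖d k‖ := abs_real_inner_le_norm _ _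
    have h2 : ‖u n‖ * ‖d k‖ ≤ M * ‖d k‖ :=
      mul_le_mul_of_nonneg_right (hu n) (norm_nonneg _)
    constructor
    · linarith [neg_abs_le (inner ℝ (u n) (d k) : ℝ)]
    · linarith [le_abs_self (inner ℝ (u n) (d k) : ℝ)]
  obtain ⟨L, _, φ, hφ, hLtend⟩ := hCc.isSeqCompact hFmem
  have hcoord : ∀ k, Tendsto (fun n => (inner ℝ (u (φ n)) (d k) : ℝ)) atTop (nhds (L k)) := by
    intro k
    have := hLtend
    rw [tendsto_pi_nhds] at this
    exact this k
  set v : ℕ → H := fun n => u (φ n) with hv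
  have hvK : ∀ n, v n ∈ K := fun n => huK _
  have hvM : ∀ n, ‖v n‖ ≤ M := fun n => hu _
  -- convergence of ⟨v n, y⟩ for all y
  have key : ∀ y : H, ∃ c : ℝ, Tendsto (fun n => (inner ℝ (v n) y : ℝ)) atTop (nhds c) := by
    intro y
    set w : H := (K.orthogonalProjection y : H) with hw
    have hwK : w ∈ K := (K.orthogonalProjection y).2
    have hyw : ∀ n, (inner ℝ (v n) y : ℝ) = inner ℝ (v n) w := by
      intro n
      have horth : y - w ∈ Kᗮ := K.sub_starProjection_mem_orthogonal y
      have : (inner ℝ (v n) (y - w) : ℝ) = 0 := by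
        exact horth (v n) (hvK n)
      rw [inner_sub_right] at this
      linarith
    have hcauchy : CauchySeq (fun n => (inner ℝ (v n) w : ℝ)) := by
      rw [Metric.cauchySeq_iff]
      intro ε hε
      obtain ⟨k, hk⟩ := hdense w hwK (ε / (3 * (M + 1))) (by positivity)
      have hkc : CauchySeq (fun n => (inner ℝ (v n) (d k) : ℝ)) := (hcoord k).cauchySeq
      rw [Metric.cauchySeq_iff] at hkc
      obtain ⟨N, hN⟩ := hkc (ε / 3) (by linarith)
      refine ⟨N, fun m hm n hn => ?_⟩
      have hbound : ∀ j, |(inner ℝ (v j) (w - d k) : ℝ)| ≤ M * (ε / (3 * (M + 1))) := by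
        intro j
        calc |(inner ℝ (v j) (w - d k) : ℝ)| ≤ ‖v j‖ * ‖w - d k‖ := abs_real_inner_le_norm _ _
          _ ≤ M * (ε / (3 * (M + 1))) :=
            mul_le_mul (hvM j) hk.le (norm_nonneg _) hM0
      have hMe : M * (ε / (3 * (M + 1))) < ε / 3 := by
        rw [← mul_div_assoc, div_lt_div_iff₀ (by positivity) (by norm_num : (0:ℝ) < 3)]
        nlinarith
      have e1 := hbound m
      have e2 := hbound n
      have e3 := hN m hm n hn
      rw [Real.dist_eq] at e3 ⊢
      have exp1 : (inner ℝ (v m) w : ℝ) - inner ℝ (v n) w =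
          (inner ℝ (v m) (w - d k) : ℝ) - inner ℝ (v n) (w - d k)
          + ((inner ℝ (v m) (d k) : ℝ) - inner ℝ (v n) (d k)) := by
        simp [inner_sub_right]; ring
      rw [exp1]
      calc |(inner ℝ (v m) (w - d k) : ℝ) - inner ℝ (v n) (w - d k)
          + ((inner ℝ (v m) (d k) : ℝ) - inner ℝ (v n) (d k))|
          ≤ |(inner ℝ (v m) (w - d k) : ℝ)| + |(inner ℝ (v n) (w - d k) : ℝ)|
            + |(inner ℝ (v m) (d k) : ℝ) - inner ℝ (v n) (d k)| := by
            refine le_trans (abs_add_le _ _) ?_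
            gcongr
            exact abs_sub _ _
        _ < ε / 3 + ε / 3 + ε / 3 := by
            refine add_lt_add (add_lt_add ?_ ?_) e3
            · exact lt_of_le_of_lt e1 hMe
            · exact lt_of_le_of_lt e2 hMe
        _ = ε := by ring
    obtain ⟨c, hc⟩ := cauchySeq_tendsto_of_complete hcauchy
    exact ⟨c, by simpa [hyw] using hc⟩
  choose c hc using key
  -- c is a bounded linear functional; Riesz
  have hadd : ∀ y₁ y₂, c (y₁ + y₂) = c y₁ + c y₂ := by
    intro y₁ y₂
    have h := (hc y₁).add (hc y₂)
    have h2 : Tendsto (fun n => (inner ℝ (v n) (y₁ + y₂) : ℝ)) atTop (nhds (c y₁ + c y₂)) := by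
      simpa [inner_add_right] using h
    exact tendsto_nhds_unique (hc _) h2
  have hsmul : ∀ (r : ℝ) y, c (r • y) = r * c y := by
    intro r y
    have h := (hc y).const_mul r
    have h2 : Tendsto (fun n => (inner ℝ (v n) (r • y) : ℝ)) atTop (nhds (r * c y)) := by
      simpa [real_inner_smul_right] using h
    exact tendsto_nhds_unique (hc _) h2
  have hbdd : ∀ y, ‖c y‖ ≤ M * ‖y‖ := by
    intro y
    have : ∀ n, |(inner ℝ (v n) y : ℝ)| ≤ M * ‖y‖ := fun n =>
      le_trans (abs_real_inner_le_norm _ _)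
        (mul_le_mul_of_nonneg_right (hvM n) (norm_nonneg _))
    have habs : Tendsto (fun n => |(inner ℝ (v n) y : ℝ)|) atTop (nhds |c y|) :=
      (hc y).abs
    exact le_of_tendsto habs (Filter.Eventually.of_forall this)
  set f : H →L[ℝ] ℝ :=
    LinearMap.mkContinuous
      { toFun := c, map_add' := hadd, map_smul' := hsmul } M hbdd with hf
  set p : H := (InnerProductSpace.toDual ℝ H).symm f with hp
  have hpy : ∀ y, (inner ℝ p y : ℝ) = c y := by
    intro y
    have : InnerProductSpace.toDual ℝ H p = f := (InnerProductSpace.toDual ℝ H).apply_symm_apply f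
    rw [← InnerProductSpace.toDual_apply_apply (𝕜 := ℝ), this]
    rfl
  exact ⟨p, φ, hφ, fun y => by rw [hpy]; exact hc y⟩

lemma opial_uniq {H : Type*} [NormedAddCommGroup H] [InnerProductSpace ℝ H]
    (x : ℝ → H) (p q : H)
    (hp : ∃ a : ℝ, Tendsto (fun t => ‖x t - p‖) atTop (nhds a))
    (hq : ∃ b : ℝ, Tendsto (fun t => ‖x t - q‖) atTop (nhds b))
    (s s' : ℕ → ℝ) (hs : Tendsto s atTop atTop) (hs' : Tendsto s' atTop atTop)
    (hps : ∀ y : H, Tendsto (fun n => (inner ℝ (x (s n)) y : ℝ)) atTop (nhds (inner ℝ p y : ℝ)))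
    (hqs : ∀ y : H, Tendsto (fun n => (inner ℝ (x (s' n)) y : ℝ)) atTop (nhds (inner ℝ q y : ℝ))) :
    p = q := by
  obtain ⟨a, ha⟩ := hp
  obtain ⟨b, hb⟩ := hq
  have hid : ∀ v : H, (inner ℝ v (q - p) : ℝ) =
      (‖v - p‖ * ‖v - p‖ - ‖v - q‖ * ‖v - q‖ - ‖p‖ * ‖p‖ + ‖q‖ * ‖q‖) / 2 := by
    intro v
    rw [← real_inner_self_eq_norm_mul_norm, ← real_inner_self_eq_norm_mul_norm,
      ← real_inner_self_eq_norm_mul_norm, ← real_inner_self_eq_norm_mul_norm]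
    simp only [inner_sub_left, inner_sub_right]
    rw [real_inner_comm p v, real_inner_comm q v]
    ring
  set c : ℝ := (a * a - b * b - ‖p‖ * ‖p‖ + ‖q‖ * ‖q‖) / 2 with hc
  have hg : Tendsto (fun t => (inner ℝ (x t) (q - p) : ℝ)) atTop (nhds c) := by
    have h : Tendsto (fun t =>
        (‖x t - p‖ * ‖x t - p‖ - ‖x t - q‖ * ‖x t - q‖ - ‖p‖ * ‖p‖ + ‖q‖ * ‖q‖) / 2)
        atTop (nhds c) := by
      apply Tendsto.div_const
      exact Tendsto.add_const _ (Tendsto.sub_const ((ha.mul ha).sub (hb.mul hb)) _)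
    simpa only [← hid] using h
  have h1 : (inner ℝ p (q - p) : ℝ) = c :=
    tendsto_nhds_unique (hps (q - p)) (hg.comp hs)
  have h2 : (inner ℝ q (q - p) : ℝ) = c :=
    tendsto_nhds_unique (hqs (q - p)) (hg.comp hs')
  have h3 : (inner ℝ (q - p) (q - p) : ℝ) = 0 := by
    rw [inner_sub_left, h1, h2]; ring
  have := inner_self_eq_zero.1 h3
  rw [sub_eq_zero] at this
  exact this.symm

theorem stmt18 {H : Type*} [NormedAddCommGroup H] [InnerProductSpace ℝ H] [CompleteSpace H]
    (S : Set H) (hS : S.Nonempty) (x : ℝ → H)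
    (h1 : ∀ z ∈ S, ∃ l : ℝ, Filter.Tendsto (fun t => ‖x t - z‖) Filter.atTop (nhds l))
    (h2 : ∀ p : H, ∀ t : ℕ → ℝ, Filter.Tendsto t Filter.atTop Filter.atTop →
      (∀ y : H, Filter.Tendsto (fun n => (inner ℝ (x (t n)) y : ℝ)) Filter.atTop
        (nhds (inner ℝ p y : ℝ))) → p ∈ S) :
    ∃ p ∈ S, ∀ y : H, Filter.Tendsto (fun t => (inner ℝ (x t) y : ℝ))
      Filter.atTop (nhds (inner ℝ p y : ℝ)) := by
  obtain ⟨z, hz⟩ := hS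
  obtain ⟨l, hl⟩ := h1 z hz
  obtain ⟨T, hT⟩ := eventually_atTop.1 (hl.eventually_lt_const (lt_add_one l))
  set M : ℝ := ‖z‖ + (l + 1) with hM
  have hbd : ∀ t : ℝ, T ≤ t → ‖x t‖ ≤ M := by
    intro t ht
    have h := (hT t ht).le
    calc ‖x t‖ = ‖x t - z + z‖ := by rw [sub_add_cancel]
      _ ≤ ‖x t - z‖ + ‖z‖ := norm_add_le _ _
      _ ≤ M := by rw [hM]; linarith
  -- extract one weak limit point p ∈ S
  obtain ⟨p, φ, hφ, hpw⟩ := weak_bw (fun n : ℕ => x (T + n)) M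
    (fun n => hbd _ (le_add_of_nonneg_right (Nat.cast_nonneg n)))
  have ht0 : Tendsto (fun n : ℕ => T + (φ n : ℝ)) atTop atTop :=
    tendsto_atTop_add_const_left _ T (tendsto_natCast_atTop_atTop.comp hφ.tendsto_atTop)
  have hpS : p ∈ S := h2 p (fun n => T + (φ n : ℝ)) ht0 (fun y => hpw y)
  refine ⟨p, hpS, ?_⟩
  intro y
  rw [tendsto_iff_seq_tendsto]
  intro s hs
  apply tendsto_of_subseq_tendsto
  intro ns hns
  have hs' : Tendsto (fun n => s (ns n)) atTop atTop := hs.comp hns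
  obtain ⟨N, hN⟩ := eventually_atTop.1 (hs'.eventually (eventually_ge_atTop T))
  obtain ⟨q, ψ, hψ, hqw⟩ := weak_bw (fun n : ℕ => x (s (ns (n + N)))) M
    (fun n => hbd _ (hN (n + N) (Nat.le_add_left N n)))
  have ht1 : Tendsto (fun n : ℕ => s (ns (ψ n + N))) atTop atTop :=
    hs'.comp ((tendsto_add_atTop_nat N).comp hψ.tendsto_atTop)
  have hqS : q ∈ S := h2 q (fun n => s (ns (ψ n + N))) ht1 (fun y => hqw y)
  have hqp : q = p :=
    (opial_uniq x p q (h1 p hpS) (h1 q hqS) (fun n => T + (φ n : ℝ))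
      (fun n => s (ns (ψ n + N))) ht0 ht1 (fun y => hpw y) (fun y => hqw y)).symm
  refine ⟨fun n => ψ n + N, ?_⟩
  have := hqw y
  rw [hqp] at this
  exact this
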